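/- Let n, k, b be integers with 1 ≤ k-1 ≤ b ≤ n, let C = {X ∈ V_{n,k,b} : n-b ≤ min(X) and max(X) ≤ b} and R = V_{n,k,b} \ C. Then the number of sets X ∈ R with min(X) + max(X) < n equals the number of sets X ∈ R with min(X) + max(X) > n. -/

import Mathlib

/-- The maximum element of a finite set of naturals (`0` for the empty set). -/
def fmax (X : Finset ℕ) : ℕ := WithBot.unbotD 0 X.max

/-- The minimum element of a finite set of naturals (`0` for the empty set). -/
def fmin (X : Finset ℕ) : ℕ := WithTop.untopD 0 X.min

/-- The vertex set `V_{n,k,b}`: all `k`-element subsets `X` of `{0,…,n}`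
with `max X - min X ≤ b`. -/
def Vnkb (n k b : ℕ) : Finset (Finset ℕ) :=
  ((Finset.range (n + 1)).powersetCard k).filter (fun X => fmax X - fmin X ≤ b)

/-- The graph `G_{n,k,b}`: two distinct vertices `X, Y` are adjacent iff
`max (X ∪ Y) - min (X ∪ Y) ≤ b`. -/
def Gnkb (n k b : ℕ) : SimpleGraph (Vnkb n k b) where
  Adj X Y := X ≠ Y ∧ fmax (X.1 ∪ Y.1) - fmin (X.1 ∪ Y.1) ≤ b
  symm := by
    constructor
    rintro X Y ⟨h1, h2⟩
    exact ⟨h1.symm, by rwa [Finset.union_comm]⟩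
  loopless := by constructor; rintro X ⟨h1, -⟩; exact h1 rfl

/-- The bandwidth of a finite graph: the minimum over all bijective labellings of the
vertices by `{0, …, |V|-1}` (equivalently `{1, …, |V|}`) of the maximal absolute
label difference along an edge. -/
noncomputable def bandwidth {V : Type*} [Fintype V] (G : SimpleGraph V) : ℕ :=
  sInf {m : ℕ | ∃ f : V ≃ Fin (Fintype.card V),
    ∀ u v : V, G.Adj u v → (((f u : ℕ) : ℤ) - ((f v : ℕ) : ℤ)).natAbs ≤ m}

/-- For `R = V_{n,k,b} \ C` with `C = {X ∈ V_{n,k,b} : n-b ≤ min X ∧ max X ≤ b}`,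
the number of `X ∈ R` with `min X + max X < n` equals the number of `X ∈ R` with
`min X + max X > n`. -/
lemma fmax_eq (X : Finset ℕ) (h : X.Nonempty) : fmax X = X.max' h := by
  rw [fmax, ← Finset.coe_max' h, WithBot.unbotD_coe]

lemma fmin_eq (X : Finset ℕ) (h : X.Nonempty) : fmin X = X.min' h := by
  rw [fmin, ← Finset.coe_min' h, WithTop.untopD_coe]

lemma refl_fmax (n : ℕ) (X : Finset ℕ) (h : X.Nonempty) (hb : ∀ x ∈ X, x ≤ n) :
    fmax (X.image (fun x => n - x)) = n - fmin X := by
  have h' : (X.image (fun x => n - x)).Nonempty := h.image _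
  rw [fmax_eq _ h', fmin_eq _ h]
  apply le_antisymm
  · apply Finset.max'_le
    intro y hy
    obtain ⟨x, hx, rfl⟩ := Finset.mem_image.1 hy
    exact Nat.sub_le_sub_left (Finset.min'_le _ _ hx) n
  · exact Finset.le_max' _ _ (Finset.mem_image_of_mem _ (X.min'_mem h))

lemma refl_fmin (n : ℕ) (X : Finset ℕ) (h : X.Nonempty) (hb : ∀ x ∈ X, x ≤ n) :
    fmin (X.image (fun x => n - x)) = n - fmax X := by
  have h' : (X.image (fun x => n - x)).Nonempty := h.image _
  rw [fmin_eq _ h', fmax_eq _ h]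
  apply le_antisymm
  · exact Finset.min'_le _ _ (Finset.mem_image_of_mem _ (X.max'_mem h))
  · apply Finset.le_min'
    intro y hy
    obtain ⟨x, hx, rfl⟩ := Finset.mem_image.1 hy
    exact Nat.sub_le_sub_left (Finset.le_max' _ _ hx) n

lemma refl_refl (n : ℕ) (X : Finset ℕ) (hb : ∀ x ∈ X, x ≤ n) :
    (X.image (fun x => n - x)).image (fun x => n - x) = X := by
  rw [Finset.image_image]
  rw [Finset.image_congr (g := id) (fun x hx => by
    have := hb x hx; simp only [Function.comp_apply, id]; omega), Finset.image_id]


lemma refl_mem (n k b : ℕ) (hk : 2 ≤ k) (X : Finset ℕ) (hX : X ∈ Vnkb n k b) :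
    X.image (fun x => n - x) ∈ Vnkb n k b ∧ X.Nonempty ∧ (∀ x ∈ X, x ≤ n) ∧
    fmin (X.image (fun x => n - x)) = n - fmax X ∧
    fmax (X.image (fun x => n - x)) = n - fmin X ∧
    fmin X ≤ fmax X ∧ fmax X ≤ n := by
  rw [Vnkb, Finset.mem_filter, Finset.mem_powersetCard] at hX
  obtain ⟨⟨hsub, hcard⟩, hband⟩ := hX
  have hne : X.Nonempty := Finset.card_pos.1 (by omega)
  have hb : ∀ x ∈ X, x ≤ n := fun x hx => by
    have := hsub hx; simpa [Nat.lt_succ_iff] using Finset.mem_range.1 this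
  have hinj : Set.InjOn (fun x => n - x) X := by
    intro x hx y hy hxy
    have := hb x hx; have := hb y hy
    simp only at hxy; omega
  have hmin := refl_fmin n X hne hb
  have hmax := refl_fmax n X hne hb
  have hmM : fmin X ≤ fmax X := by
    rw [fmin_eq _ hne, fmax_eq _ hne]
    exact Finset.min'_le _ _ (X.max'_mem hne)
  have hMn : fmax X ≤ n := by
    rw [fmax_eq _ hne]; exact hb _ (X.max'_mem hne)
  refine ⟨?_, hne, hb, hmin, hmax, hmM, hMn⟩
  rw [Vnkb, Finset.mem_filter, Finset.mem_powersetCard]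
  refine ⟨⟨?_, ?_⟩, ?_⟩
  · intro y hy
    obtain ⟨x, hx, rfl⟩ := Finset.mem_image.1 hy
    exact Finset.mem_range.2 (by have := hb x hx; omega)
  · rw [Finset.card_image_of_injOn hinj, hcard]
  · rw [hmin, hmax]; omega

theorem card_R_lt_eq_card_R_gt (n k b : ℕ) (h1 : 1 ≤ k - 1) (h2 : k - 1 ≤ b) (h3 : b ≤ n) :
    ((Vnkb n k b).filter
        (fun X => ¬(n - b ≤ fmin X ∧ fmax X ≤ b) ∧ fmin X + fmax X < n)).card =
    ((Vnkb n k b).filter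
        (fun X => ¬(n - b ≤ fmin X ∧ fmax X ≤ b) ∧ fmin X + fmax X > n)).card := by
  have hk : 2 ≤ k := by omega
  have key : ∀ X, X ∈ (Vnkb n k b).filter
      (fun X => ¬(n - b ≤ fmin X ∧ fmax X ≤ b) ∧ fmin X + fmax X < n) →
      X.image (fun x => n - x) ∈ (Vnkb n k b).filter
      (fun X => ¬(n - b ≤ fmin X ∧ fmax X ≤ b) ∧ fmin X + fmax X > n) := by
    intro X hX
    rw [Finset.mem_filter] at hX ⊢
    obtain ⟨hV, hC, hlt⟩ := hX
    obtain ⟨hV', hne, hb, hmin, hmax, hmM, hMn⟩ := refl_mem n k b hk X hV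
    refine ⟨hV', ?_, ?_⟩
    · rw [hmin, hmax]; omega
    · rw [hmin, hmax]; omega
  have key2 : ∀ X, X ∈ (Vnkb n k b).filter
      (fun X => ¬(n - b ≤ fmin X ∧ fmax X ≤ b) ∧ fmin X + fmax X > n) →
      X.image (fun x => n - x) ∈ (Vnkb n k b).filter
      (fun X => ¬(n - b ≤ fmin X ∧ fmax X ≤ b) ∧ fmin X + fmax X < n) := by
    intro X hX
    rw [Finset.mem_filter] at hX ⊢
    obtain ⟨hV, hC, hlt⟩ := hX
    obtain ⟨hV', hne, hb, hmin, hmax, hmM, hMn⟩ := refl_mem n k b hk X hV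
    refine ⟨hV', ?_, ?_⟩
    · rw [hmin, hmax]; omega
    · rw [hmin, hmax]; omega
  apply Finset.card_bij' (fun X _ => X.image (fun x => n - x))
      (fun X _ => X.image (fun x => n - x)) key key2
  · intro X hX
    rw [Finset.mem_filter] at hX
    obtain ⟨_, _, hb, _⟩ := refl_mem n k b hk X hX.1
    exact refl_refl n X hb
  · intro X hX
    rw [Finset.mem_filter] at hX
    obtain ⟨_, _, hb, _⟩ := refl_mem n k b hk X hX.1
    exact refl_refl n X hb
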